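/- Let d ≥ 2, let U be a d×d complex unitary matrix, and let λ : Fin d → ℝ satisfy λᵢ ≥ 0 for all i and Σᵢ λᵢ = 1. Set a := (1/4) Σ_{i,j} |√(λᵢ)·U_{ij} − √(λⱼ)·U_{ji}|². If 1/2 ≤ a, then a ≤ 1 and for every index i one has λᵢ ≤ 1/2 + √(a(1−a)). -/

import Mathlib

open scoped BigOperators
open Matrix

-- swap reindexing
lemma swap_sum' {d : ℕ} {α : Type*} [AddCommMonoid α] (f : Fin d × Fin d → α) :
    ∑ p : Fin d × Fin d, f (p.2, p.1) = ∑ p : Fin d × Fin d, f p :=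
  Fintype.sum_equiv (Equiv.prodComm _ _) _ _ (fun _ => rfl)

-- antisymmetric × symmetric cross term vanishes
lemma cross_zero' {d : ℕ} (f g : Fin d × Fin d → ℂ) :
    ∑ p : Fin d × Fin d,
      (starRingEnd ℂ) ((f p - f (p.2, p.1))/2) * ((g p + g (p.2, p.1))/2) = 0 := by
  set F : Fin d × Fin d → ℂ :=
    fun p => (starRingEnd ℂ) ((f p - f (p.2, p.1))/2) * ((g p + g (p.2, p.1))/2) with hF
  have h1 : ∑ p : Fin d × Fin d, F (p.2, p.1) = ∑ p, F p := swap_sum' F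
  have h2 : ∀ p : Fin d × Fin d, F (p.2, p.1) = -(F p) := by
    intro p
    simp only [hF, map_div₀, map_sub]
    ring
  have h3 : ∑ p : Fin d × Fin d, F p = -∑ p : Fin d × Fin d, F p := by
    nth_rewrite 1 [← h1]
    rw [Finset.sum_congr rfl (fun p _ => h2 p), Finset.sum_neg_distrib]
  have h4 : ∑ p : Fin d × Fin d, F p = 0 := by
    have := h3
    linear_combination (1/2 : ℂ) * this
  exact h4

lemma norm_sq_eq' {d : ℕ} (x : EuclideanSpace ℂ (Fin d × Fin d)) :
    ‖x‖^2 = ∑ p : Fin d × Fin d, Complex.normSq (x p) := by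
  rw [EuclideanSpace.norm_eq, Real.sq_sqrt]
  · simp [Complex.sq_norm]
  · positivity

lemma key_ineq' (m p A B L : ℝ) (hm : 0 ≤ m) (hp : 0 ≤ p) (hA : 0 ≤ A) (hB : 0 ≤ B)
    (hL : 0 ≤ L) (e1 : m^2 + p^2 = 1) (e2 : m^2 ≤ 1/2) (e3 : A^2 + B^2 = 1)
    (e4 : B^2 ≤ A^2) (hle : L ≤ m*A + p*B) : L^2 ≤ 1/2 + A*B := by
  have h2mp : 2*m*p ≤ 1 := by nlinarith [sq_nonneg (m - p)]
  have hd1 : 0 ≤ p^2 - m^2 := by linarith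
  have hd2 : 0 ≤ A^2 - B^2 := by linarith
  have hkey : 2*(m*A + p*B)^2 ≤ (A+B)^2 := by
    nlinarith [mul_nonneg hd1 hd2, mul_nonneg (mul_nonneg hA hB) (by linarith : (0:ℝ) ≤ 1 - 2*m*p)]
  have hL2 : L^2 ≤ (m*A + p*B)^2 := pow_le_pow_left₀ hL hle 2
  nlinarith

/-- For a `d × d` unitary `U` and a probability vector `λ`, with
`a = (1/4) ∑ᵢⱼ |√λᵢ Uᵢⱼ − √λⱼ Uⱼᵢ|²`: if `1/2 ≤ a` then `a ≤ 1` and every entry of `λ`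
is at most `1/2 + √(a(1−a))`. -/
theorem schmidt_bound_of_werner_overlap (d : ℕ) (hd : 2 ≤ d)
    (U : Matrix.unitaryGroup (Fin d) ℂ)
    (lam : Fin d → ℝ) (hlam : ∀ i, 0 ≤ lam i) (hsum : ∑ i, lam i = 1)
    (a : ℝ)
    (ha : a = (1 / 4) * ∑ i, ∑ j,
      ‖(Real.sqrt (lam i) : ℂ) * (U : Matrix (Fin d) (Fin d) ℂ) i j
        - (Real.sqrt (lam j) : ℂ) * (U : Matrix (Fin d) (Fin d) ℂ) j i‖ ^ 2)
    (hha : 1 / 2 ≤ a) :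
    a ≤ 1 ∧ ∀ i, lam i ≤ 1 / 2 + Real.sqrt (a * (1 - a)) := by
  classical
  set M : Matrix (Fin d) (Fin d) ℂ := (U : Matrix (Fin d) (Fin d) ℂ) with hMdef
  have hUU : M * Mᴴ = 1 := Matrix.mem_unitaryGroup_iff.mp U.2
  have hrow : ∀ i : Fin d, ∑ j, (starRingEnd ℂ) (M i j) * M i j = 1 := by
    intro i
    have h1 : (M * Mᴴ) i i = 1 := by rw [hUU]; simp [Matrix.one_apply]
    rw [Matrix.mul_apply] at h1
    simpa [Matrix.conjTranspose_apply, mul_comm] using h1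
  have hrowR : ∀ i : Fin d, ∑ j, Complex.normSq (M i j) = 1 := by
    intro i
    have h1 := hrow i
    have h2 : ((∑ j, Complex.normSq (M i j) : ℝ) : ℂ) = 1 := by
      push_cast
      rw [← h1]
      refine Finset.sum_congr rfl (fun j _ => ?_)
      rw [mul_comm, Complex.mul_conj]
    exact_mod_cast h2
  -- the state and its (anti)symmetrizations
  set ψ : EuclideanSpace ℂ (Fin d × Fin d) :=
    WithLp.toLp 2 (fun p : Fin d × Fin d => (Real.sqrt (lam p.1) : ℂ) * M p.1 p.2) with hψdef
  set ψm : EuclideanSpace ℂ (Fin d × Fin d) :=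
    WithLp.toLp 2 (fun p : Fin d × Fin d => (ψ p - ψ (p.2, p.1)) / 2) with hψmdef
  set ψp : EuclideanSpace ℂ (Fin d × Fin d) :=
    WithLp.toLp 2 (fun p : Fin d × Fin d => (ψ p + ψ (p.2, p.1)) / 2) with hψpdef
  have hψsplit : ψ = ψm + ψp := by
    ext p
    show ψ p = ψm p + ψp p
    simp only [hψmdef, hψpdef]
    ring
  have hψ1 : ‖ψ‖^2 = 1 := by
    rw [norm_sq_eq']
    rw [Fintype.sum_prod_type]
    have : ∀ i : Fin d, ∑ j, Complex.normSq (ψ (i, j)) = lam i := by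
      intro i
      have : ∀ j : Fin d, Complex.normSq (ψ (i, j)) = lam i * Complex.normSq (M i j) := by
        intro j
        simp only [hψdef]
        rw [Complex.normSq_mul, Complex.normSq_ofReal, Real.mul_self_sqrt (hlam i)]
      rw [Finset.sum_congr rfl (fun j _ => this j), ← Finset.mul_sum, hrowR i, mul_one]
    rw [Finset.sum_congr rfl (fun i _ => this i), hsum]
  have hψm2 : ‖ψm‖^2 = a := by
    rw [norm_sq_eq', ha, Fintype.sum_prod_type]
    rw [Finset.mul_sum]
    refine Finset.sum_congr rfl (fun i _ => ?_)
    rw [Finset.mul_sum]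
    refine Finset.sum_congr rfl (fun j _ => ?_)
    simp only [hψmdef, hψdef]
    rw [Complex.sq_norm, Complex.normSq_div]
    norm_num [Complex.normSq_apply]
    ring
  have hpar : ‖ψm‖^2 + ‖ψp‖^2 = ‖ψ‖^2 := by
    rw [norm_sq_eq', norm_sq_eq', norm_sq_eq', ← Finset.sum_add_distrib]
    have key : ∀ p : Fin d × Fin d, Complex.normSq (ψm p) + Complex.normSq (ψp p)
        = (Complex.normSq (ψ p) + Complex.normSq (ψ (p.2, p.1))) / 2 := by
      intro p
      simp only [hψmdef, hψpdef]
      rw [Complex.normSq_div, Complex.normSq_div, Complex.normSq_sub, Complex.normSq_add]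
      norm_num [Complex.normSq_apply]
      ring
    rw [Finset.sum_congr rfl (fun p _ => key p)]
    rw [← Finset.sum_div, Finset.sum_add_distrib]
    rw [swap_sum' (fun p => Complex.normSq (ψ p))]
    ring
  have hψp2 : ‖ψp‖^2 = 1 - a := by rw [hψ1] at hpar; linarith
  have haign : a ≤ 1 := by nlinarith [sq_nonneg ‖ψp‖]
  refine ⟨haign, fun k => ?_⟩
  -- the reference product vector
  set v : EuclideanSpace ℂ (Fin d × Fin d) :=
    WithLp.toLp 2 (fun p : Fin d × Fin d => if p.1 = k then M k p.2 else 0) with hvdef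
  set vm : EuclideanSpace ℂ (Fin d × Fin d) :=
    WithLp.toLp 2 (fun p : Fin d × Fin d => (v p - v (p.2, p.1)) / 2) with hvmdef
  set vp : EuclideanSpace ℂ (Fin d × Fin d) :=
    WithLp.toLp 2 (fun p : Fin d × Fin d => (v p + v (p.2, p.1)) / 2) with hvpdef
  have hvsplit : v = vm + vp := by
    ext p
    show v p = vm p + vp p
    simp only [hvmdef, hvpdef]
    ring
  have hv1 : ‖v‖^2 = 1 := by
    rw [norm_sq_eq', Fintype.sum_prod_type]
    have : ∀ i : Fin d, ∑ j, Complex.normSq (v (i, j))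
        = if i = k then (1:ℝ) else 0 := by
      intro i
      by_cases hik : i = k
      · subst hik
        simp only [hvdef, PiLp.toLp_apply, if_pos (rfl : i = i), ↓reduceIte]
        rw [hrowR i]
      · simp [hvdef, hik]
    rw [Finset.sum_congr rfl (fun i _ => this i)]
    simp
  have hvcross : ∑ p : Fin d × Fin d, v p * (starRingEnd ℂ) (v (p.2, p.1))
      = (Complex.normSq (M k k) : ℂ) := by
    rw [Fintype.sum_prod_type]
    have : ∀ i : Fin d, ∑ j, v (i, j) * (starRingEnd ℂ) (v (j, i))
        = if i = k then M k k * (starRingEnd ℂ) (M k k) else 0 := by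
      intro i
      by_cases hik : i = k
      · subst hik
        simp only [hvdef]
        simp [Finset.sum_ite_eq, apply_ite (starRingEnd ℂ)]
      · simp [hvdef, hik]
    rw [Finset.sum_congr rfl (fun i _ => this i)]
    simp [Complex.mul_conj]
  have hvm2 : ‖vm‖^2 ≤ 1/2 := by
    rw [norm_sq_eq']
    have key : ∀ p : Fin d × Fin d, Complex.normSq (vm p)
        = (Complex.normSq (v p) + Complex.normSq (v (p.2, p.1))
            - 2 * (v p * (starRingEnd ℂ) (v (p.2, p.1))).re) / 4 := by
      intro p
      simp only [hvmdef]
      rw [Complex.normSq_div, Complex.normSq_sub]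
      norm_num [Complex.normSq_apply]
    rw [Finset.sum_congr rfl (fun p _ => key p), ← Finset.sum_div]
    have h1 : ∑ p : Fin d × Fin d, (Complex.normSq (v p) + Complex.normSq (v (p.2, p.1))
            - 2 * (v p * (starRingEnd ℂ) (v (p.2, p.1))).re)
        = 2 - 2 * Complex.normSq (M k k) := by
      rw [Finset.sum_sub_distrib, Finset.sum_add_distrib]
      rw [swap_sum' (fun p => Complex.normSq (v p))]
      have h2 : ∑ p : Fin d × Fin d, Complex.normSq (v p) = 1 := by
        rw [← norm_sq_eq', hv1]
      rw [h2, ← Finset.mul_sum]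
      have h3 : ∑ p : Fin d × Fin d, (v p * (starRingEnd ℂ) (v (p.2, p.1))).re
          = Complex.normSq (M k k) := by
        rw [← Complex.re_sum, hvcross, Complex.ofReal_re]
      rw [h3]
      ring
    rw [h1]
    nlinarith [Complex.normSq_nonneg (M k k)]
  have hvpar : ‖vm‖^2 + ‖vp‖^2 = 1 := by
    rw [norm_sq_eq', norm_sq_eq', ← Finset.sum_add_distrib]
    have key : ∀ p : Fin d × Fin d, Complex.normSq (vm p) + Complex.normSq (vp p)
        = (Complex.normSq (v p) + Complex.normSq (v (p.2, p.1))) / 2 := by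
      intro p
      simp only [hvmdef, hvpdef]
      rw [Complex.normSq_div, Complex.normSq_div, Complex.normSq_sub, Complex.normSq_add]
      norm_num [Complex.normSq_apply]
      ring
    rw [Finset.sum_congr rfl (fun p _ => key p), ← Finset.sum_div, Finset.sum_add_distrib]
    rw [swap_sum' (fun p => Complex.normSq (v p))]
    have h2 : ∑ p : Fin d × Fin d, Complex.normSq (v p) = 1 := by
      rw [← norm_sq_eq', hv1]
    rw [h2]
    norm_num
  -- inner products
  have hinner : @inner ℂ _ _ v ψ = (Real.sqrt (lam k) : ℂ) := by
    rw [PiLp.inner_apply]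
    have : ∀ p : Fin d × Fin d, @inner ℂ _ _ (v p) (ψ p)
        = (starRingEnd ℂ) (v p) * ψ p := fun p => by rw [RCLike.inner_apply]; ring
    rw [Finset.sum_congr rfl (fun p _ => this p), Fintype.sum_prod_type]
    have hterm : ∀ i : Fin d, ∑ j, (starRingEnd ℂ) (v (i, j)) * ψ (i, j)
        = if i = k then (Real.sqrt (lam k) : ℂ) else 0 := by
      intro i
      by_cases hik : i = k
      · subst hik
        simp only [hvdef, hψdef, PiLp.toLp_apply, if_pos (rfl : i = i), ↓reduceIte]
        have : ∀ j : Fin d, (starRingEnd ℂ) (M i j) * ((Real.sqrt (lam i) : ℂ) * M i j)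
            = (Real.sqrt (lam i) : ℂ) * ((starRingEnd ℂ) (M i j) * M i j) := by
          intro j; ring
        rw [Finset.sum_congr rfl (fun j _ => this j), ← Finset.mul_sum, hrow i, mul_one]
      · simp [hvdef, hik]
    rw [Finset.sum_congr rfl (fun i _ => hterm i)]
    simp
  have hcross1 : @inner ℂ _ _ vm ψp = 0 := by
    rw [PiLp.inner_apply]
    refine Eq.trans (Finset.sum_congr rfl (fun p _ => ?_)) (cross_zero' (fun p => v p) (fun p => ψ p))
    simp only [hvmdef, hψpdef, PiLp.toLp_apply, RCLike.inner_apply]; ring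
  have hcross2 : @inner ℂ _ _ vp ψm = 0 := by
    rw [← inner_conj_symm]
    have : @inner ℂ _ _ ψm vp = 0 := by
      rw [PiLp.inner_apply]
      refine Eq.trans (Finset.sum_congr rfl (fun p _ => ?_)) (cross_zero' (fun p => ψ p) (fun p => v p))
      simp only [hψmdef, hvpdef, PiLp.toLp_apply, RCLike.inner_apply]; ring
    rw [this, map_zero]
  have hdecomp : @inner ℂ _ _ v ψ = @inner ℂ _ _ vm ψm + @inner ℂ _ _ vp ψp := by
    rw [hvsplit, hψsplit, inner_add_left, inner_add_right, inner_add_right,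
      hcross1, hcross2]
    ring
  -- the bound
  have hLbound : Real.sqrt (lam k) ≤ ‖vm‖ * ‖ψm‖ + ‖vp‖ * ‖ψp‖ := by
    have h1 : ‖@inner ℂ _ _ v ψ‖ = Real.sqrt (lam k) := by
      rw [hinner, Complex.norm_real, Real.norm_eq_abs, abs_of_nonneg (Real.sqrt_nonneg _)]
    calc Real.sqrt (lam k) = ‖@inner ℂ _ _ v ψ‖ := h1.symm
      _ = ‖@inner ℂ _ _ vm ψm + @inner ℂ _ _ vp ψp‖ := by rw [hdecomp]
      _ ≤ ‖@inner ℂ _ _ vm ψm‖ + ‖@inner ℂ _ _ vp ψp‖ := norm_add_le _ _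
      _ ≤ ‖vm‖ * ‖ψm‖ + ‖vp‖ * ‖ψp‖ :=
          add_le_add (norm_inner_le_norm _ _) (norm_inner_le_norm _ _)
  have hfin : (Real.sqrt (lam k))^2 ≤ 1/2 + ‖ψm‖ * ‖ψp‖ := by
    refine key_ineq' ‖vm‖ ‖vp‖ ‖ψm‖ ‖ψp‖ (Real.sqrt (lam k)) (norm_nonneg _)
      (norm_nonneg _) (norm_nonneg _) (norm_nonneg _) (Real.sqrt_nonneg _)
      hvpar hvm2 (by rw [hψm2, hψp2]; ring) (by rw [hψm2, hψp2]; linarith) hLbound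
  have hsq : Real.sqrt (a * (1 - a)) = ‖ψm‖ * ‖ψp‖ := by
    have : a * (1 - a) = (‖ψm‖ * ‖ψp‖)^2 := by rw [← hψp2, ← hψm2]; ring
    rw [this, Real.sqrt_sq (mul_nonneg (norm_nonneg _) (norm_nonneg _))]
  rw [Real.sq_sqrt (hlam k)] at hfin
  rw [hsq]
  exact hfin
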